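/- The map θ : A[X] → H sending x to θ_x extends to an injective A-algebra homomorphism from the group algebra A[X] onto the subalgebra Θ of H; i.e. Θ is isomorphic as an A-algebra to A[X]. -/

import Mathlib

open LaurentPolynomial

/-- The map `θ : x ↦ θ_x` extends to an injective `A`-algebra homomorphism from the group
algebra `A[X]` onto the subalgebra `Θ` of `H`, i.e. `Θ ≅ A[X]`.  The injectivity uses
that the elements `θ_z T_w` (`z ∈ X`, `w ∈ W₀`) form an `A`-basis of `H`. -/
theorem theta_extends_to_injective_algHom {X W₀ H : Type*} [CommGroup X] [Ring H]
    [Algebra (LaurentPolynomial ℤ) H]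
    (θ : X →* H) (Tw : W₀ → H)
    (hbasis : LinearIndependent (LaurentPolynomial ℤ)
      (fun p : X × W₀ => (θ p.1 : H) * Tw p.2))
    (hTone : ∃ w1 : W₀, Tw w1 = 1) :
    Function.Injective
      (MonoidAlgebra.lift (LaurentPolynomial ℤ) H X θ) ∧
    AlgHom.range (MonoidAlgebra.lift (LaurentPolynomial ℤ) H X θ) =
      Algebra.adjoin (LaurentPolynomial ℤ) (Set.range θ) := by
  obtain ⟨w1, hw1⟩ := hTone
  have hinj : Function.Injective (fun x : X => (x, w1)) := fun a b h => by
    simpa using congrArg Prod.fst h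
  have li : LinearIndependent (LaurentPolynomial ℤ) (fun x : X => (θ x : H)) := by
    have h2 : (fun x : X => (θ x : H)) =
        (fun p : X × W₀ => (θ p.1 : H) * Tw p.2) ∘ (fun x : X => (x, w1)) := by
      funext x; simp [hw1]
    rw [h2]
    exact hbasis.comp (fun x : X => (x, w1)) hinj
  constructor
  · intro f g hfg
    have : Finsupp.linearCombination (LaurentPolynomial ℤ) (fun x : X => (θ x : H)) f.coeff =
        Finsupp.linearCombination (LaurentPolynomial ℤ) (fun x : X => (θ x : H)) g.coeff := by
      simpa [Finsupp.linearCombination_apply, MonoidAlgebra.lift_apply] using hfg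
    exact MonoidAlgebra.coeff_injective (li this)
  · apply le_antisymm
    · rintro _ ⟨p, rfl⟩
      show (MonoidAlgebra.lift (LaurentPolynomial ℤ) H X θ) p ∈
        Algebra.adjoin (LaurentPolynomial ℤ) (Set.range θ)
      induction p using MonoidAlgebra.induction_on with
      | of g =>
        rw [MonoidAlgebra.lift_of]
        exact Algebra.subset_adjoin ⟨g, rfl⟩
      | add f g hf hg =>
        rw [map_add]; exact add_mem hf hg
      | smul r f hf =>
        rw [map_smul]
        exact Subalgebra.smul_mem _ hf r
    · rw [Algebra.adjoin_le_iff]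
      rintro _ ⟨x, rfl⟩
      exact ⟨MonoidAlgebra.of _ _ x, MonoidAlgebra.lift_of θ x⟩
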